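/- For all real numbers x > 0, y > 0, and 0 < s < 1/2, one has β(x+4s, y) ≤ β(x,y) · (x(x+1)/((x+1)² + y²))^{2s}. -/

import Mathlib

open MeasureTheory

/-- `β(x,y) = ∫_{-π/2}^{π/2} (cos t)^{x-1} e^{yt} dt`. -/
noncomputable def beta (x y : ℝ) : ℝ :=
  ∫ t in (-(Real.pi / 2))..(Real.pi / 2), (Real.cos t) ^ (x - 1) * Real.exp (y * t)

open Real Set Filter intervalIntegral
open scoped ENNReal

lemma cos_rpow_integrable {r : ℝ} (hr : -1 < r) :
    IntervalIntegrable (fun t => Real.cos t ^ r) volume (-(π/2)) (π/2) := by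
  rcases le_or_gt 0 r with h0 | h0
  · refine (Continuous.intervalIntegrable ?_ _ _)
    exact continuous_iff_continuousAt.2 fun t =>
      (Real.continuousAt_rpow_const _ _ (Or.inr h0)).comp Real.continuous_cos.continuousAt
  · have hmeas : Measurable fun t => Real.cos t ^ r := by fun_prop
    have h1 : IntervalIntegrable (fun t => Real.cos t ^ r) volume 0 (π/2) := by
      have hbase : IntervalIntegrable (fun u : ℝ => u ^ r) volume 0 (π/2) :=
        intervalIntegrable_rpow' hr
      have hg : IntervalIntegrable (fun t : ℝ => (2/π)^r * (π/2 - t) ^ r) volume 0 (π/2) := by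
        have := ((hbase.comp_sub_left (π/2)).symm).const_mul ((2/π)^r)
        simpa using this
      refine hg.mono_fun' hmeas.aestronglyMeasurable ?_
      rw [uIoc_of_le (by positivity : (0:ℝ) ≤ π/2)]
      refine (ae_restrict_iff' measurableSet_Ioc).2 (ae_of_all _ fun t ht => ?_)
      dsimp only
      rw [Real.norm_of_nonneg (Real.rpow_nonneg (Real.cos_nonneg_of_mem_Icc
        ⟨by linarith [ht.1.le, pi_pos], ht.2⟩) _)]
      rcases eq_or_lt_of_le ht.2 with h2 | h2
      · rw [h2, Real.cos_pi_div_two, Real.zero_rpow h0.ne, sub_self,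
          Real.zero_rpow h0.ne, mul_zero]
      · have hu0 : 0 < π/2 - t := by linarith
        have hu2 : π/2 - t ≤ π/2 := by linarith [ht.1.le]
        have hsin : 2/π * (π/2 - t) ≤ Real.cos t := by
          rw [← Real.sin_pi_div_two_sub]
          exact Real.mul_le_sin hu0.le hu2
        have hpos : 0 < 2/π * (π/2 - t) := by positivity
        calc Real.cos t ^ r ≤ (2/π * (π/2 - t)) ^ r :=
              Real.rpow_le_rpow_of_nonpos hpos hsin h0.le
          _ = (2/π)^r * (π/2 - t)^r := Real.mul_rpow (by positivity) hu0.le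
    have h2 : IntervalIntegrable (fun t => Real.cos t ^ r) volume (-(π/2)) 0 := by
      have hbase : IntervalIntegrable (fun u : ℝ => u ^ r) volume 0 (π/2) :=
        intervalIntegrable_rpow' hr
      have hg : IntervalIntegrable (fun t : ℝ => (2/π)^r * (t + π/2) ^ r) volume (-(π/2)) 0 := by
        have := (hbase.comp_add_right (π/2)).const_mul ((2/π)^r)
        simpa using this
      refine hg.mono_fun' hmeas.aestronglyMeasurable ?_
      rw [uIoc_of_le (by linarith [pi_pos] : -(π/2) ≤ (0:ℝ))]
      refine (ae_restrict_iff' measurableSet_Ioc).2 (ae_of_all _ fun t ht => ?_)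
      dsimp only
      have hu0 : 0 < t + π/2 := by linarith [ht.1]
      have hu2 : t + π/2 ≤ π/2 := by linarith [ht.2]
      have hsin : 2/π * (t + π/2) ≤ Real.cos t := by
        rw [← Real.sin_add_pi_div_two]
        exact Real.mul_le_sin hu0.le hu2
      have hpos : 0 < 2/π * (t + π/2) := by positivity
      rw [Real.norm_of_nonneg (Real.rpow_nonneg (Real.cos_nonneg_of_mem_Icc
        ⟨by linarith [ht.1], by linarith [ht.2, pi_pos]⟩) _)]
      calc Real.cos t ^ r ≤ (2/π * (t + π/2)) ^ r :=
            Real.rpow_le_rpow_of_nonpos hpos hsin h0.le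
        _ = (2/π)^r * (t + π/2)^r := Real.mul_rpow (by positivity) hu0.le
    exact h2.trans h1

lemma beta_integrand_integrable {r : ℝ} (y : ℝ) (hr : -1 < r) :
    IntervalIntegrable (fun t => Real.cos t ^ r * Real.exp (y * t)) volume (-(π/2)) (π/2) := by
  have hg : IntervalIntegrable (fun t => Real.cos t ^ r * Real.exp (|y| * (π/2)))
      volume (-(π/2)) (π/2) := (cos_rpow_integrable hr).mul_const _
  refine hg.mono_fun' (Measurable.aestronglyMeasurable (by fun_prop)) ?_
  rw [uIoc_of_le (by linarith [pi_pos] : -(π/2) ≤ π/2)]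
  refine (ae_restrict_iff' measurableSet_Ioc).2 (ae_of_all _ fun t ht => ?_)
  dsimp only
  have hc : 0 ≤ Real.cos t := Real.cos_nonneg_of_mem_Icc ⟨ht.1.le, ht.2⟩
  have h1 : y * t ≤ |y| * (π/2) := by
    calc y * t ≤ |y * t| := le_abs_self _
      _ = |y| * |t| := abs_mul _ _
      _ ≤ |y| * (π/2) := by
          refine mul_le_mul_of_nonneg_left ?_ (abs_nonneg _)
          rw [abs_le]; exact ⟨ht.1.le, ht.2⟩
  rw [Real.norm_of_nonneg (mul_nonneg (Real.rpow_nonneg hc _) (Real.exp_pos _).le)]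
  exact mul_le_mul_of_nonneg_left (Real.exp_le_exp.2 h1) (Real.rpow_nonneg hc _)

lemma beta_pos {x : ℝ} (y : ℝ) (hx : 0 < x) : 0 < beta x y := by
  refine intervalIntegral.intervalIntegral_pos_of_pos_on
    (beta_integrand_integrable y (by linarith)) (fun t ht => ?_) (by linarith [pi_pos])
  exact mul_pos (Real.rpow_pos_of_pos (Real.cos_pos_of_mem_Ioo ht) _) (Real.exp_pos _)

lemma cos_rpow_continuous {p : ℝ} (hp : 0 ≤ p) : Continuous fun t : ℝ => Real.cos t ^ p :=
  continuous_iff_continuousAt.2 fun _ =>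
    (Real.continuousAt_rpow_const _ _ (Or.inr hp)).comp Real.continuous_cos.continuousAt

lemma beta_rec {x : ℝ} (y : ℝ) (hx : 0 < x) :
    ((x+1)^2 + y^2) * beta (x+2) y = x * (x+1) * beta x y := by
  have hab : -(π/2) ≤ π/2 := by linarith [pi_pos]
  have contE : Continuous fun t : ℝ => Real.exp (y*t) :=
    Real.continuous_exp.comp (continuous_const.mul continuous_id)
  -- integrable pieces
  have I0 : IntervalIntegrable (fun t => Real.cos t ^ (x-1) * Real.exp (y*t))
      volume (-(π/2)) (π/2) := beta_integrand_integrable y (by linarith)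
  have I2 : IntervalIntegrable (fun t => Real.cos t ^ (x+1) * Real.exp (y*t))
      volume (-(π/2)) (π/2) :=
    ((cos_rpow_continuous (by linarith)).mul contE).intervalIntegrable _ _
  have IS : IntervalIntegrable (fun t => Real.cos t ^ x * Real.sin t * Real.exp (y*t))
      volume (-(π/2)) (π/2) :=
    (((cos_rpow_continuous hx.le).mul Real.continuous_sin).mul contE).intervalIntegrable _ _
  -- derivative of G = cos^{x+1} * exp(yt)
  have derivG : ∀ t ∈ Ioo (-(π/2)) (π/2),
      HasDerivAt (fun u => Real.cos u ^ (x+1) * Real.exp (y*u))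
        (y * (Real.cos t ^ (x+1) * Real.exp (y*t))
          - (x+1) * (Real.cos t ^ x * Real.sin t * Real.exp (y*t))) t := by
    intro t ht
    have hc : 0 < Real.cos t := Real.cos_pos_of_mem_Ioo ht
    have hd1 : HasDerivAt (fun u : ℝ => Real.cos u ^ (x+1))
        ((x+1) * Real.cos t ^ x * (-Real.sin t)) t := by
      have := (Real.hasDerivAt_rpow_const (x := Real.cos t) (p := x+1)
        (Or.inl hc.ne')).comp t (Real.hasDerivAt_cos t)
      simpa [add_sub_cancel_right, Function.comp_def] using this
    have hdE : HasDerivAt (fun u : ℝ => Real.exp (y*u)) (y * Real.exp (y*t)) t := by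
      have := (Real.hasDerivAt_exp (y*t)).comp t ((hasDerivAt_id t).const_mul y)
      simpa [Function.comp_def, mul_comm] using this
    have := hd1.mul hdE
    refine this.congr_deriv ?_
    ring
  -- derivative of F = cos^x * sin * exp(yt)
  have derivF : ∀ t ∈ Ioo (-(π/2)) (π/2),
      HasDerivAt (fun u => Real.cos u ^ x * Real.sin u * Real.exp (y*u))
        ((x+1) * (Real.cos t ^ (x+1) * Real.exp (y*t))
          - x * (Real.cos t ^ (x-1) * Real.exp (y*t))
          + y * (Real.cos t ^ x * Real.sin t * Real.exp (y*t))) t := by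
    intro t ht
    have hc : 0 < Real.cos t := Real.cos_pos_of_mem_Ioo ht
    have hd1 : HasDerivAt (fun u : ℝ => Real.cos u ^ x)
        (x * Real.cos t ^ (x-1) * (-Real.sin t)) t := by
      have := (Real.hasDerivAt_rpow_const (x := Real.cos t) (p := x)
        (Or.inl hc.ne')).comp t (Real.hasDerivAt_cos t)
      simpa [Function.comp_def] using this
    have hdE : HasDerivAt (fun u : ℝ => Real.exp (y*u)) (y * Real.exp (y*t)) t := by
      have := (Real.hasDerivAt_exp (y*t)).comp t ((hasDerivAt_id t).const_mul y)
      simpa [Function.comp_def, mul_comm] using this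
    have hd := (hd1.mul (Real.hasDerivAt_sin t)).mul hdE
    refine HasDerivAt.congr_deriv hd (Eq.symm ?_)
    simp only [Pi.mul_apply]
    have e1 : Real.cos t ^ x = Real.cos t ^ (x-1) * Real.cos t := by
      rw [← Real.rpow_add_one hc.ne' (x-1)]; norm_num
    have e2 : Real.cos t ^ (x+1) = Real.cos t ^ x * Real.cos t :=
      Real.rpow_add_one hc.ne' x
    have hs2 : Real.sin t ^ 2 = 1 - Real.cos t ^ 2 := Real.sin_sq t
    rw [e2, e1]
    linear_combination (x * Real.cos t ^ (x-1) * Real.exp (y*t)) * hs2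
  -- FTC for G
  have contG : Continuous fun u : ℝ => Real.cos u ^ (x+1) * Real.exp (y*u) :=
    (cos_rpow_continuous (by linarith)).mul contE
  have intG' : IntervalIntegrable (fun t => y * (Real.cos t ^ (x+1) * Real.exp (y*t))
      - (x+1) * (Real.cos t ^ x * Real.sin t * Real.exp (y*t))) volume (-(π/2)) (π/2) :=
    (I2.const_mul _).sub (IS.const_mul _)
  have hG := intervalIntegral.integral_eq_sub_of_hasDeriv_right_of_le hab
    contG.continuousOn (fun t ht => (derivG t ht).hasDerivWithinAt) intG'
  rw [Real.cos_pi_div_two, Real.cos_neg, Real.cos_pi_div_two,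
    Real.zero_rpow (by positivity : x+1 ≠ 0)] at hG
  simp only [zero_mul, sub_zero, sub_self] at hG
  -- FTC for F
  have contF : Continuous fun u : ℝ => Real.cos u ^ x * Real.sin u * Real.exp (y*u) :=
    ((cos_rpow_continuous hx.le).mul Real.continuous_sin).mul contE
  have intF' : IntervalIntegrable (fun t => (x+1) * (Real.cos t ^ (x+1) * Real.exp (y*t))
      - x * (Real.cos t ^ (x-1) * Real.exp (y*t))
      + y * (Real.cos t ^ x * Real.sin t * Real.exp (y*t))) volume (-(π/2)) (π/2) :=
    ((I2.const_mul _).sub (I0.const_mul _)).add (IS.const_mul _)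
  have hF := intervalIntegral.integral_eq_sub_of_hasDeriv_right_of_le hab
    contF.continuousOn (fun t ht => (derivF t ht).hasDerivWithinAt) intF'
  rw [Real.cos_pi_div_two, Real.cos_neg, Real.cos_pi_div_two,
    Real.zero_rpow hx.ne'] at hF
  simp only [zero_mul, sub_zero, sub_self] at hF
  -- split the integrals
  rw [intervalIntegral.integral_sub (I2.const_mul _) (IS.const_mul _),
    intervalIntegral.integral_const_mul, intervalIntegral.integral_const_mul] at hG
  rw [intervalIntegral.integral_add ((I2.const_mul _).sub (I0.const_mul _)) (IS.const_mul _),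
    intervalIntegral.integral_sub (I2.const_mul _) (I0.const_mul _),
    intervalIntegral.integral_const_mul, intervalIntegral.integral_const_mul,
    intervalIntegral.integral_const_mul] at hF
  have hb2 : beta (x+2) y
      = ∫ t in (-(π/2))..(π/2), Real.cos t ^ (x+1) * Real.exp (y*t) := by
    unfold beta
    simp only [show x+2-1 = x+1 from by ring]
  have hb0 : beta x y = ∫ t in (-(π/2))..(π/2), Real.cos t ^ (x-1) * Real.exp (y*t) := rfl
  rw [hb2, hb0]
  set B2 := ∫ t in (-(π/2))..(π/2), Real.cos t ^ (x+1) * Real.exp (y*t)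
  set B0 := ∫ t in (-(π/2))..(π/2), Real.cos t ^ (x-1) * Real.exp (y*t)
  set S := ∫ t in (-(π/2))..(π/2), Real.cos t ^ x * Real.sin t * Real.exp (y*t)
  linear_combination (x+1) * hF + y * hG

lemma beta_interp {x y a b : ℝ} (hx : 0 < x) (ha : 0 < a) (hb : 0 < b) (hab : a + b = 1) :
    beta (a * x + b * (x+2)) y ≤ beta x y ^ a * beta (x+2) y ^ b := by
  have hab' : -(π/2) ≤ π/2 := by linarith [pi_pos]
  set μ := volume.restrict (Ioo (-(π/2)) (π/2)) with hμ
  have hbeta : ∀ z : ℝ, beta z y = ∫ t, Real.cos t ^ (z-1) * Real.exp (y*t) ∂μ := by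
    intro z
    rw [beta, intervalIntegral.integral_of_le hab', ← integral_Ioc_eq_integral_Ioo]
  -- the two factors
  set f : ℝ → ℝ := fun t => (Real.cos t ^ (x-1) * Real.exp (y*t)) ^ a with hf
  set g : ℝ → ℝ := fun t => (Real.cos t ^ (x+1) * Real.exp (y*t)) ^ b with hg
  have e : Real.HolderConjugate (1/a) (1/b) := Real.holderConjugate_one_div ha hb hab
  have hmem : ∀ {c z : ℝ}, 0 < c → -1 < z →
      MemLp (fun t => (Real.cos t ^ z * Real.exp (y*t)) ^ c) (ENNReal.ofReal (1/c)) μ := by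
    intro c z hc hz
    have A : ENNReal.ofReal (1/c) ≠ 0 := by
      rwa [Ne, ENNReal.ofReal_eq_zero, not_le, one_div_pos]
    have B : ENNReal.ofReal (1/c) ≠ ∞ := ENNReal.ofReal_ne_top
    have hmeas : AEStronglyMeasurable (fun t => (Real.cos t ^ z * Real.exp (y*t)) ^ c) μ :=
      Measurable.aestronglyMeasurable (by fun_prop)
    rw [← memLp_norm_rpow_iff hmeas A B, ENNReal.toReal_ofReal (one_div_nonneg.mpr hc.le),
      ENNReal.div_self A B, memLp_one_iff_integrable]
    have hint : IntegrableOn (fun t => Real.cos t ^ z * Real.exp (y*t))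
        (Ioo (-(π/2)) (π/2)) volume := by
      rw [← intervalIntegrable_iff_integrableOn_Ioo_of_le hab']
      exact beta_integrand_integrable y hz
    apply Integrable.congr hint
    refine eventuallyEq_of_mem (self_mem_ae_restrict measurableSet_Ioo) fun t ht => ?_
    have hcos : 0 < Real.cos t := Real.cos_pos_of_mem_Ioo ht
    have hbase : 0 ≤ Real.cos t ^ z * Real.exp (y*t) :=
      mul_nonneg (Real.rpow_nonneg hcos.le _) (Real.exp_pos _).le
    rw [Real.norm_of_nonneg (Real.rpow_nonneg hbase _), ← Real.rpow_mul hbase,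
      mul_one_div_cancel hc.ne', Real.rpow_one]
  -- apply Hölder
  have hθ : a * x + b * (x+2) - 1 = a * (x-1) + b * (x+1) := by linear_combination hab
  have key := MeasureTheory.integral_mul_le_Lp_mul_Lq_of_nonneg e
    (f := f) (g := g)
    ((ae_restrict_iff' measurableSet_Ioo).2 (ae_of_all _ fun t ht =>
      Real.rpow_nonneg (mul_nonneg (Real.rpow_nonneg
        (Real.cos_pos_of_mem_Ioo ht).le _) (Real.exp_pos _).le) _))
    ((ae_restrict_iff' measurableSet_Ioo).2 (ae_of_all _ fun t ht =>
      Real.rpow_nonneg (mul_nonneg (Real.rpow_nonneg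
        (Real.cos_pos_of_mem_Ioo ht).le _) (Real.exp_pos _).le) _))
    (hmem ha (by linarith)) (hmem hb (by linarith))
  rw [one_div_one_div, one_div_one_div] at key
  have h1 : ∫ t, f t * g t ∂μ = beta (a * x + b * (x+2)) y := by
    rw [hbeta]
    refine integral_congr_ae (eventuallyEq_of_mem (self_mem_ae_restrict measurableSet_Ioo)
      fun t ht => ?_)
    have hcos : 0 < Real.cos t := Real.cos_pos_of_mem_Ioo ht
    have hE : (0:ℝ) < Real.exp (y*t) := Real.exp_pos _
    simp only [hf, hg]
    rw [Real.mul_rpow (Real.rpow_nonneg hcos.le _) hE.le,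
      Real.mul_rpow (Real.rpow_nonneg hcos.le _) hE.le,
      ← Real.rpow_mul hcos.le, ← Real.rpow_mul hcos.le,
      ← Real.exp_mul, ← Real.exp_mul]
    have : Real.cos t ^ ((x-1)*a) * Real.exp (y*t*a) * (Real.cos t ^ ((x+1)*b) * Real.exp (y*t*b))
        = Real.cos t ^ ((x-1)*a + (x+1)*b) * Real.exp (y*t*a + y*t*b) := by
      rw [Real.rpow_add hcos, Real.exp_add]; ring
    rw [this, hθ]
    have hyt : y*t*a + y*t*b = y*t := by linear_combination (y*t)*hab
    rw [hyt]
    ring_nf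
  have h2 : ∫ t, f t ^ (1/a) ∂μ = beta x y := by
    rw [hbeta]
    refine integral_congr_ae (eventuallyEq_of_mem (self_mem_ae_restrict measurableSet_Ioo)
      fun t ht => ?_)
    have hcos : 0 < Real.cos t := Real.cos_pos_of_mem_Ioo ht
    have hbase : 0 ≤ Real.cos t ^ (x-1) * Real.exp (y*t) :=
      mul_nonneg (Real.rpow_nonneg hcos.le _) (Real.exp_pos _).le
    simp only [hf]
    rw [← Real.rpow_mul hbase, mul_one_div_cancel ha.ne', Real.rpow_one]
  have h3 : ∫ t, g t ^ (1/b) ∂μ = beta (x+2) y := by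
    rw [hbeta]
    refine integral_congr_ae (eventuallyEq_of_mem (self_mem_ae_restrict measurableSet_Ioo)
      fun t ht => ?_)
    have hcos : 0 < Real.cos t := Real.cos_pos_of_mem_Ioo ht
    have hbase : 0 ≤ Real.cos t ^ (x+1) * Real.exp (y*t) :=
      mul_nonneg (Real.rpow_nonneg hcos.le _) (Real.exp_pos _).le
    simp only [hg]
    rw [← Real.rpow_mul hbase, mul_one_div_cancel hb.ne', Real.rpow_one,
      show x+2-1 = x+1 from by ring]
  rw [h1, h2, h3] at key
  exact key


theorem beta_positive_upper_bound (x y s : ℝ) (hx : 0 < x) (hy : 0 < y)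
    (hs0 : 0 < s) (hs : s < 1 / 2) :
    beta (x + 4 * s) y ≤ beta x y * (x * (x + 1) / ((x + 1) ^ 2 + y ^ 2)) ^ (2 * s) := by
  have h1 : 0 < 1 - 2*s := by linarith
  have h2 : 0 < 2*s := by linarith
  have hinterp := beta_interp (y := y) hx h1 h2 (by ring)
  have hxeq : (1-2*s) * x + 2*s * (x+2) = x + 4*s := by ring
  rw [hxeq] at hinterp
  have hrec := beta_rec (x := x) y hx
  have hB : 0 < beta x y := beta_pos y hx
  have hB2 : 0 < beta (x+2) y := beta_pos y (by linarith)
  have hden : 0 < (x+1)^2 + y^2 := by positivity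
  have hratio : beta (x+2) y = beta x y * (x*(x+1)/((x+1)^2+y^2)) := by
    field_simp
    linarith [hrec]
  calc beta (x + 4*s) y ≤ beta x y ^ (1-2*s) * beta (x+2) y ^ (2*s) := hinterp
    _ = beta x y * (x * (x + 1) / ((x + 1) ^ 2 + y ^ 2)) ^ (2 * s) := by
        rw [hratio, Real.mul_rpow hB.le (by positivity), ← mul_assoc,
          ← Real.rpow_add hB, show 1-2*s+2*s = 1 from by ring, Real.rpow_one]
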